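/- (Necessary conditions) Suppose that for every h1 ∈ H1 and every ε > 0 there exists h2 ∈ H2 such that A1 h1 = B1 h2 and ‖A2 h1 − B2 h2‖ ≤ ε. Then: (a) there exists C > 0 such that ‖A1* h4‖ ≤ C ‖B1* h4‖ for all h4 ∈ H4; and (b) for all h4 ∈ H4 and h5 ∈ H5, if B1* h4 + B2* h5 = 0 then A1* h4 + A2* h5 = 0. -/

import Mathlib

open ContinuousLinearMap
open scoped InnerProductSpace

set_option maxHeartbeats 1000000 in
/-- Necessary conditions for the mixed exact/approximate range inclusion goal. -/
theorem mixed_goal_necessary_conditions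
    {H1 H2 H4 H5 : Type*}
    [NormedAddCommGroup H1] [InnerProductSpace ℝ H1] [CompleteSpace H1]
    [NormedAddCommGroup H2] [InnerProductSpace ℝ H2] [CompleteSpace H2]
    [NormedAddCommGroup H4] [InnerProductSpace ℝ H4] [CompleteSpace H4]
    [NormedAddCommGroup H5] [InnerProductSpace ℝ H5] [CompleteSpace H5]
    (A1 : H1 →L[ℝ] H4) (A2 : H1 →L[ℝ] H5)
    (B1 : H2 →L[ℝ] H4) (B2 : H2 →L[ℝ] H5)
    (hgoal : ∀ h1 : H1, ∀ ε : ℝ, 0 < ε →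
      ∃ h2 : H2, A1 h1 = B1 h2 ∧ ‖A2 h1 - B2 h2‖ ≤ ε) :
    (∃ C : ℝ, 0 < C ∧ ∀ h4 : H4, ‖adjoint A1 h4‖ ≤ C * ‖adjoint B1 h4‖) ∧
    (∀ (h4 : H4) (h5 : H5), adjoint B1 h4 + adjoint B2 h5 = 0 →
      adjoint A1 h4 + adjoint A2 h5 = 0) := by
  classical
  -- exact range inclusion
  have hsol : ∀ h1 : H1, ∃ h2 : H2, B1 h2 = A1 h1 := by
    intro h1
    obtain ⟨h2, h, -⟩ := hgoal h1 1 one_pos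
    exact ⟨h2, h.symm⟩
  set K : Submodule ℝ H2 := LinearMap.ker (B1 : H2 →ₗ[ℝ] H4) with hKdef
  have hKc : IsClosed (K : Set H2) := isClosed_ker B1
  haveI : CompleteSpace K := hKc.completeSpace_coe
  -- well-definedness of projection onto Kᗮ of solutions
  have hwd : ∀ u v : H2, B1 u = B1 v →
      Kᗮ.orthogonalProjectionOnto u = Kᗮ.orthogonalProjectionOnto v := by
    intro u v h
    have huv : u - v ∈ K := by
      simp [hKdef, LinearMap.mem_ker, map_sub, sub_eq_zero, h]
    have h0 := Submodule.orthogonalProjectionOnto_orthogonal_apply_eq_zero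
      (K := K) huv
    rw [map_sub, sub_eq_zero] at h0
    exact h0
  set sol : H1 → H2 := fun h1 => Classical.choose (hsol h1) with hsoldef
  have hsolspec : ∀ h1 : H1, B1 (sol h1) = A1 h1 := fun h1 =>
    Classical.choose_spec (hsol h1)
  -- the minimal-norm solution map
  set f : H1 →ₗ[ℝ] H2 :=
    { toFun := fun h1 => (Kᗮ.orthogonalProjectionOnto (sol h1) : H2)
      map_add' := by
        intro x y
        have : Kᗮ.orthogonalProjectionOnto (sol (x + y)) =
            Kᗮ.orthogonalProjectionOnto (sol x + sol y) := by
          apply hwd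
          rw [map_add, hsolspec, hsolspec, hsolspec, map_add]
        show (↑((Kᗮ.orthogonalProjectionOnto) (sol (x+y))) : H2) =
          ↑((Kᗮ.orthogonalProjectionOnto) (sol x)) + ↑((Kᗮ.orthogonalProjectionOnto) (sol y))
        rw [this, map_add]
        rfl
      map_smul' := by
        intro c x
        have : Kᗮ.orthogonalProjectionOnto (sol (c • x)) =
            Kᗮ.orthogonalProjectionOnto (c • sol x) := by
          apply hwd
          rw [map_smul, hsolspec, hsolspec, map_smul]
        show (↑((Kᗮ.orthogonalProjectionOnto) (sol (c • x))) : H2) =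
          c • (↑((Kᗮ.orthogonalProjectionOnto) (sol x)) : H2)
        rw [this, map_smul]
        rfl } with hfdef
  have hmem : ∀ h1 : H1, f h1 ∈ Kᗮ := fun h1 =>
    (Kᗮ.orthogonalProjectionOnto (sol h1)).2
  have hB1f : ∀ h1 : H1, B1 (f h1) = A1 h1 := by
    intro h1
    have hk : sol h1 - (Kᗮ.orthogonalProjectionOnto (sol h1) : H2) ∈ K := by
      have := Submodule.sub_starProjection_mem_orthogonal (K := Kᗮ) (sol h1)
      rwa [Submodule.orthogonal_orthogonal] at this
    have : B1 (sol h1 - (Kᗮ.orthogonalProjectionOnto (sol h1) : H2)) = 0 := hk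
    rw [map_sub, sub_eq_zero] at this
    calc B1 (f h1) = B1 (sol h1) := this.symm
      _ = A1 h1 := hsolspec h1
  -- characterization of the graph
  have hchar : ∀ (x : H1) (y : H2), (y ∈ Kᗮ ∧ B1 y = A1 x) ↔ y = f x := by
    intro x y
    constructor
    · rintro ⟨hy, hBy⟩
      have h1 : Kᗮ.orthogonalProjectionOnto (sol x) = Kᗮ.orthogonalProjectionOnto y := by
        apply hwd
        rw [hsolspec, hBy]
      have h2 : (Kᗮ.orthogonalProjectionOnto y : H2) = y :=
        (Submodule.starProjection_eq_self_iff).2 hy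
      show y = (Kᗮ.orthogonalProjectionOnto (sol x) : H2)
      rw [h1, h2]
    · rintro rfl
      exact ⟨hmem x, hB1f x⟩
  -- closed graph
  have hclosed : IsClosed (f.graph : Set (H1 × H2)) := by
    have hset : (f.graph : Set (H1 × H2)) =
        {p : H1 × H2 | p.2 ∈ Kᗮ} ∩ {p : H1 × H2 | B1 p.2 = A1 p.1} := by
      ext p
      simp only [SetLike.mem_coe, LinearMap.mem_graph_iff, Set.mem_inter_iff,
        Set.mem_setOf_eq]
      exact (hchar p.1 p.2).symm
    rw [hset]
    refine IsClosed.inter ?_ (isClosed_eq (B1.continuous.comp continuous_snd)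
      (A1.continuous.comp continuous_fst))
    exact (K.isClosed_orthogonal).preimage continuous_snd
  have hcont : Continuous f := f.continuous_of_isClosed_graph hclosed
  set C0 : H1 →L[ℝ] H2 := ⟨f, hcont⟩ with hC0def
  have hA1 : A1 = B1 ∘L C0 := by
    ext h1
    exact (hB1f h1).symm
  constructor
  · refine ⟨‖adjoint C0‖ + 1, by positivity, ?_⟩
    intro h4
    have hadj : adjoint A1 h4 = adjoint C0 (adjoint B1 h4) := by
      rw [hA1, adjoint_comp]
      rfl
    rw [hadj]
    calc ‖adjoint C0 (adjoint B1 h4)‖ ≤ ‖adjoint C0‖ * ‖adjoint B1 h4‖ :=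
        le_opNorm _ _
      _ ≤ (‖adjoint C0‖ + 1) * ‖adjoint B1 h4‖ := by
        nlinarith [norm_nonneg (adjoint B1 h4)]
  · intro h4 h5 hker
    set v := adjoint A1 h4 + adjoint A2 h5 with hv
    have key : ∀ ε : ℝ, 0 < ε → ⟪v, v⟫_ℝ ≤ ε * ‖h5‖ := by
      intro ε hε
      obtain ⟨h2, he, hb⟩ := hgoal v ε hε
      have hcalc : ⟪v, v⟫_ℝ =
          ⟪adjoint B1 h4 + adjoint B2 h5, h2⟫_ℝ + ⟪h5, A2 v - B2 h2⟫_ℝ := by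
        rw [hv]
        simp only [inner_add_left, adjoint_inner_left, inner_sub_right, he]
        rw [← hv, he]
        ring
      rw [hker, inner_zero_left, zero_add] at hcalc
      calc ⟪v, v⟫_ℝ = ⟪h5, A2 v - B2 h2⟫_ℝ := hcalc
        _ ≤ ‖h5‖ * ‖A2 v - B2 h2‖ := real_inner_le_norm _ _
        _ ≤ ‖h5‖ * ε := mul_le_mul_of_nonneg_left hb (norm_nonneg _)
        _ = ε * ‖h5‖ := mul_comm _ _
    have hnp : ⟪v, v⟫_ℝ ≤ 0 := by
      by_contra h
      push_neg at h
      have h5pos : 0 < ‖h5‖ := by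
        rcases (norm_nonneg h5).lt_or_eq with h' | h'
        · exact h'
        · exfalso
          have := key 1 one_pos
          rw [← h'] at this
          simp at this
          simp [this] at h
      have hkey := key (⟪v, v⟫_ℝ / (2 * ‖h5‖)) (by positivity)
      rw [div_mul_eq_mul_div, mul_comm] at hkey
      have heq : ‖h5‖ * ⟪v, v⟫_ℝ / (2 * ‖h5‖) = ⟪v, v⟫_ℝ / 2 := by
        field_simp
      rw [heq] at hkey
      linarith
    have : ⟪v, v⟫_ℝ = 0 := le_antisymm hnp real_inner_self_nonneg
    exact inner_self_eq_zero.1 this
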